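/- Let K ⊆ L be an extension of fields which are both D-module algebras, with K a D-stable subalgebra of L. If x ∈ L^D (i.e. d·x = ε(d)x for all d ∈ D) is algebraic over K, then every coefficient of the minimal polynomial of x over K lies in K^D; in particular, x is algebraic over the subfield K^D. -/

import Mathlib

open scoped TensorProduct

noncomputable section

section Setup

variable (R D A : Type*) [Field R] [Ring D] [Bialgebra R D]
  [CommRing A] [Algebra R A] [Module D A] [IsScalarTower R D A]

/-- Sweedler sum `d ⊗ e ↦ (d • a) * (e • b)` as a linear map on `D ⊗ D`. -/
def measureAux (a b : A) : D ⊗[R] D →ₗ[R] A :=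
  TensorProduct.lift <| LinearMap.mk₂ R (fun d e => (d • a) * (e • b))
    (fun d d' e => by
      show ((d + d') • a) * (e • b) = (d • a) * (e • b) + (d' • a) * (e • b)
      rw [add_smul, add_mul])
    (fun r d e => by
      show ((r • d) • a) * (e • b) = r • ((d • a) * (e • b))
      rw [smul_assoc, smul_mul_assoc])
    (fun d e e' => by
      show (d • a) * ((e + e') • b) = (d • a) * (e • b) + (d • a) * (e' • b)
      rw [add_smul, mul_add])
    (fun r d e => by
      show (d • a) * ((r • e) • b) = r • ((d • a) * (e • b))
      rw [smul_assoc, mul_smul_comm])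

/-- The action of `D` on `A` measures `A` (so `A` is a `D`-module algebra). -/
def Measures : Prop :=
  (∀ d : D, d • (1 : A) = (Coalgebra.counit (R := R) d) • (1 : A)) ∧
  (∀ (d : D) (a b : A), d • (a * b) = measureAux R D A a b (Coalgebra.comul (R := R) d))

lemma smul_mul_const (h : Measures R D A) (d : D) (a b : A)
    (hb : ∀ e : D, e • b = (Coalgebra.counit (R := R) e) • b) :
    d • (a * b) = (d • a) * b := by
  rw [h.2]
  let f : D →ₗ[R] A :=
    { toFun := fun s => (s • a) * b
      map_add' := fun s t => by simp [add_smul, add_mul]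
      map_smul' := fun r s => by simp [smul_assoc, smul_mul_assoc] }
  have key : measureAux R D A a b =
      f ∘ₗ (TensorProduct.rid R D).toLinearMap ∘ₗ
        (LinearMap.lTensor D (Coalgebra.counit (R := R))) := by
    apply TensorProduct.ext'
    intro s t
    simp [measureAux, f, hb t, mul_smul_comm, smul_assoc]
  rw [key]
  simp [Coalgebra.lTensor_counit_comul, f]

end Setup

theorem minpoly_coeff_isConst
    (R D K L : Type*) [Field R] [Ring D] [Bialgebra R D]
    [Field K] [Algebra R K] [Module D K] [IsScalarTower R D K]
    [Field L] [Algebra R L] [Module D L] [IsScalarTower R D L]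
    [Algebra K L] [IsScalarTower R K L]
    (hK : Measures R D K) (hL : Measures R D L)
    (hcompat : ∀ (d : D) (c : K), d • (algebraMap K L c) = algebraMap K L (d • c))
    (x : L) (hx : ∀ d : D, d • x = (Coalgebra.counit (R := R) d) • x)
    (halg : IsAlgebraic K x) :
    (∀ (m : ℕ) (d : D),
        d • ((minpoly K x).coeff m) =
          (Coalgebra.counit (R := R) d) • ((minpoly K x).coeff m)) ∧
    (∃ p : Polynomial K, p ≠ 0 ∧
        (∀ (m : ℕ) (d : D),
          d • (p.coeff m) = (Coalgebra.counit (R := R) d) • (p.coeff m)) ∧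
        Polynomial.aeval x p = 0) := by
  classical
  have hint : IsIntegral K x := halg.isIntegral
  set p := minpoly K x with hp
  have hp0 : p ≠ 0 := minpoly.ne_zero hint
  have hmonic : p.Monic := minpoly.monic hint
  set n := p.natDegree with hn
  -- powers of x are constants
  have hpow : ∀ i : ℕ, ∀ d : D, d • (x ^ i) = (Coalgebra.counit (R := R) d) • x ^ i := by
    intro i
    induction i with
    | zero => intro d; simpa using hL.1 d
    | succ i ih =>
      intro d
      rw [pow_succ', smul_mul_const R D L hL d x (x ^ i) ih, hx, smul_mul_assoc]
  have main : ∀ (m : ℕ) (d : D),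
      d • (p.coeff m) = (Coalgebra.counit (R := R) d) • (p.coeff m) := by
    intro m d
    set q : Polynomial K :=
      ∑ i ∈ Finset.range (n + 1), Polynomial.C (d • p.coeff i) * Polynomial.X ^ i with hq
    have hqcoeff : ∀ k, q.coeff k = if k ∈ Finset.range (n + 1) then d • p.coeff k else 0 := by
      intro k
      simp [hq, Polynomial.finset_sum_coeff, Polynomial.coeff_C_mul, Polynomial.coeff_X_pow,
        Finset.sum_ite_eq' (Finset.range (n + 1)) k]
    have haq : Polynomial.aeval x q = 0 := by
      have h1 : Polynomial.aeval x p = ∑ i ∈ Finset.range (n + 1),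
          algebraMap K L (p.coeff i) * x ^ i := by
        rw [Polynomial.aeval_eq_sum_range]
        simp [Algebra.smul_def]
        rfl
      have h2 : d • Polynomial.aeval x p = Polynomial.aeval x q := by
        rw [h1, Finset.smul_sum, hq, map_sum]
        refine Finset.sum_congr rfl fun i _ => ?_
        rw [smul_mul_const R D L hL d _ _ (hpow i), hcompat]
        simp [Algebra.smul_def]
      rw [← h2, minpoly.aeval, smul_zero]
    set r : Polynomial K := q - (Coalgebra.counit (R := R) d) • p with hr
    have har : Polynomial.aeval x r = 0 := by
      have : (Coalgebra.counit (R := R) d) • p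
          = (algebraMap R K (Coalgebra.counit (R := R) d)) • p :=
        (algebraMap_smul K _ p).symm
      rw [hr, map_sub, haq, this, map_smul, minpoly.aeval, smul_zero, sub_zero]
    have hrcoeff : ∀ k, n ≤ k → r.coeff k = 0 := by
      intro k hk
      rcases eq_or_lt_of_le hk with h | h
      · rw [hr, Polynomial.coeff_sub, Polynomial.coeff_smul, hqcoeff, ← h]
        have : p.coeff n = 1 := hmonic.coeff_natDegree
        simp [this, hK.1 d]
      · rw [hr, Polynomial.coeff_sub, Polynomial.coeff_smul, hqcoeff]
        have hpk : p.coeff k = 0 := Polynomial.coeff_eq_zero_of_natDegree_lt h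
        simp [hpk, Finset.mem_range, Nat.lt_succ_iff, not_le.mpr h]
    have hrdeg : r.degree < p.degree := by
      rw [Polynomial.degree_eq_natDegree hp0]
      exact (Polynomial.degree_lt_iff_coeff_zero r n).mpr
        (fun k hk => hrcoeff k (by exact_mod_cast hk))
    have hr0 : r = 0 := by
      by_contra h0
      exact absurd (minpoly.degree_le_of_ne_zero K x h0 har) (not_le.mpr hrdeg)
    have := congrArg (fun s => Polynomial.coeff s m) hr0
    simp only [hr, Polynomial.coeff_sub, Polynomial.coeff_smul, Polynomial.coeff_zero,
      sub_eq_zero, hqcoeff] at this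
    by_cases hm : m ∈ Finset.range (n + 1)
    · rw [if_pos hm] at this; exact this
    · have hpm : p.coeff m = 0 :=
        Polynomial.coeff_eq_zero_of_natDegree_lt (by simpa [Nat.lt_succ_iff, not_le] using hm)
      simp [hpm]
  exact ⟨main, p, hp0, main, minpoly.aeval K x⟩
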